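/- For the n-dimensional hypercube Q_n (n ≥ 1), pmd(Q_n) ≤ 2n − 1. -/

import Mathlib

open SimpleGraph

variable {V : Type*}

/-- A positive matching in a simple graph: a set `M` of pairwise disjoint edges of `G` together
with a vertex weighting `w` such that an edge `uv` of `G` satisfies `w u + w v > 0` iff the edge
belongs to `M`. -/
def IsPositiveMatching (G : SimpleGraph V) (M : Set (Sym2 V)) : Prop :=
  M ⊆ G.edgeSet ∧
  (∀ e ∈ M, ∀ f ∈ M, e ≠ f → ∀ v : V, v ∈ e → v ∉ f) ∧
  ∃ w : V → ℝ, ∀ u v : V, G.Adj u v → (0 < w u + w v ↔ s(u, v) ∈ M)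

/-- A positive matching decomposition of `G` with parts `E 0, …, E (p-1)`: an ordered partition
of the edge set of `G` such that each part is a positive matching of `G` minus the earlier
parts. -/
def IsPMD (G : SimpleGraph V) {p : ℕ} (E : Fin p → Set (Sym2 V)) : Prop :=
  (∀ i j : Fin p, i ≠ j → Disjoint (E i) (E j)) ∧
  (⋃ i, E i) = G.edgeSet ∧
  ∀ i : Fin p, IsPositiveMatching (G.deleteEdges (⋃ j : Fin p, ⋃ (_ : j < i), E j)) (E i)

/-- The minimum number of parts in a positive matching decomposition of `G`. -/
noncomputable def pmd (G : SimpleGraph V) : ℕ :=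
  sInf {p : ℕ | ∃ E : Fin p → Set (Sym2 V), IsPMD G E}

/-- Box (Cartesian) product of a family of graphs. -/
def boxProdPi {ι : Type*} {W : ι → Type*} (G : ∀ i, SimpleGraph (W i)) :
    SimpleGraph (∀ i, W i) where
  Adj a b := ∃ i, (G i).Adj (a i) (b i) ∧ ∀ j, j ≠ i → a j = b j
  symm := ⟨fun _ _ ⟨i, h, hj⟩ => ⟨i, h.symm, fun j hji => (hj j hji).symm⟩⟩
  loopless := ⟨fun a ⟨i, h, _⟩ => (G i).irrefl (v := a i) h⟩

/-- The `n`-dimensional hypercube graph `Qₙ = K₂ □ ⋯ □ K₂`. -/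
def hypercube (n : ℕ) : SimpleGraph (Fin n → Fin 2) :=
  boxProdPi fun _ => (⊤ : SimpleGraph (Fin 2))

namespace PMDAux

/-- Parity of the sum of coordinates away from `i`. -/
def par {n : ℕ} (i : Fin n) (a : Fin n → Fin 2) : ℕ :=
  (∑ j ∈ Finset.univ.erase i, (a j : ℕ)) % 2

lemma par_lt_two {n : ℕ} (i : Fin n) (a : Fin n → Fin 2) : par i a < 2 :=
  Nat.mod_lt _ two_pos

lemma par_eq_of_agree {n : ℕ} (i : Fin n) {u v : Fin n → Fin 2}
    (h : ∀ j, j ≠ i → u j = v j) : par i u = par i v := by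
  unfold par
  congr 1
  exact Finset.sum_congr rfl fun j hj => by rw [h j (Finset.ne_of_mem_erase hj)]

lemma par_ne_of_flip {n : ℕ} (i : Fin n) {u v : Fin n → Fin 2} {k : Fin n} (hk : k ≠ i)
    (hne : u k ≠ v k) (h : ∀ j, j ≠ k → u j = v j) : par i u ≠ par i v := by
  have hkmem : k ∈ Finset.univ.erase i := Finset.mem_erase.mpr ⟨hk, Finset.mem_univ _⟩
  have hu : ∑ j ∈ (Finset.univ.erase i).erase k, ((u j : ℕ)) + ((u k : ℕ))
      = ∑ j ∈ Finset.univ.erase i, ((u j : ℕ)) :=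
    Finset.sum_erase_add (Finset.univ.erase i) (fun j => ((u j : ℕ))) hkmem
  have hv : ∑ j ∈ (Finset.univ.erase i).erase k, ((v j : ℕ)) + ((v k : ℕ))
      = ∑ j ∈ Finset.univ.erase i, ((v j : ℕ)) :=
    Finset.sum_erase_add (Finset.univ.erase i) (fun j => ((v j : ℕ))) hkmem
  have hrest : ∑ j ∈ (Finset.univ.erase i).erase k, ((u j : ℕ))
      = ∑ j ∈ (Finset.univ.erase i).erase k, ((v j : ℕ)) :=
    Finset.sum_congr rfl fun j hj => by rw [h j (Finset.ne_of_mem_erase hj)]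
  have h01 : (u k : ℕ) + (v k : ℕ) = 1 := by
    have h1 : (u k : ℕ) ≠ (v k : ℕ) := fun hh => hne (Fin.ext hh)
    have h2 := (u k).isLt
    have h3 := (v k).isLt
    omega
  unfold par
  omega

/-- Edges of the hypercube in direction `m / 2`; for `m = 2n-2` all of them, otherwise
only those whose endpoints have off-direction parity `m % 2`. -/
def Epart (n : ℕ) (m : ℕ) : Set (Sym2 (Fin n → Fin 2)) :=
  { e | ∃ u v : Fin n → Fin 2, ∃ i : Fin n, e = s(u, v) ∧ u i ≠ v i ∧
      (∀ j, j ≠ i → u j = v j) ∧ (i : ℕ) = m / 2 ∧ (m = 2 * n - 2 ∨ par i u = m % 2) }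

lemma hyp_adj {n : ℕ} {u v : Fin n → Fin 2} :
    (hypercube n).Adj u v ↔ ∃ i, u i ≠ v i ∧ ∀ j, j ≠ i → u j = v j := by
  change (∃ i, (⊤ : SimpleGraph (Fin 2)).Adj (u i) (v i) ∧ ∀ j, j ≠ i → u j = v j) ↔ _
  constructor <;> rintro ⟨i, h1, h2⟩ <;> exact ⟨i, by simpa using h1, h2⟩

lemma diff_unique {n : ℕ} {u v : Fin n → Fin 2} {i k : Fin n} (hne : u i ≠ v i)
    (h : ∀ j, j ≠ k → u j = v j) : i = k := by
  by_contra hik; exact hne (h i hik)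

lemma mem_spec {n : ℕ} {m : ℕ} {u v : Fin n → Fin 2} {k : Fin n}
    (hmem : s(u, v) ∈ Epart n m) (hne : u k ≠ v k) (h : ∀ j, j ≠ k → u j = v j) :
    (k : ℕ) = m / 2 ∧ (m = 2 * n - 2 ∨ par k u = m % 2) := by
  obtain ⟨u', v', i', heq, hne', hag', hdir, hpar⟩ := hmem
  rw [Sym2.eq_iff] at heq
  rcases heq with ⟨rfl, rfl⟩ | ⟨rfl, rfl⟩
  · have hik : i' = k := diff_unique hne' h
    subst hik
    exact ⟨hdir, hpar⟩
  · -- here u = v', v = u'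
    have hik : i' = k := diff_unique (fun hh => hne' hh.symm) h
    rw [hik] at hdir hpar hag'
    refine ⟨hdir, ?_⟩
    rcases hpar with h' | h'
    · exact Or.inl h'
    · refine Or.inr ?_
      have hpv : par k v = par k u := par_eq_of_agree k hag'
      rw [← hpv]
      exact h'

lemma mem_unique {n : ℕ} {m m' : ℕ} (hm : m < 2 * n - 1) (hm' : m' < 2 * n - 1)
    {e : Sym2 (Fin n → Fin 2)} (h1 : e ∈ Epart n m) (h2 : e ∈ Epart n m') : m = m' := by
  obtain ⟨u, v, i, rfl, hne, hag, hdir, hpar⟩ := h1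
  obtain ⟨hdir', hpar'⟩ := mem_spec h2 hne hag
  rcases hpar with hpar | hpar <;> rcases hpar' with hpar' | hpar' <;> omega

lemma edge_through {n : ℕ} {m : ℕ} {e : Sym2 (Fin n → Fin 2)} (he : e ∈ Epart n m)
    {x : Fin n → Fin 2} (hx : x ∈ e) :
    ∃ i : Fin n, (i : ℕ) = m / 2 ∧ e = s(x, Function.update x i (1 - x i)) := by
  obtain ⟨u, v, i, rfl, hne, hag, hdir, _⟩ := he
  refine ⟨i, hdir, ?_⟩
  have flip2 : ∀ x y : Fin 2, x ≠ y → y = 1 - x := by decide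
  have flip_eq : ∀ a b : Fin n → Fin 2, a i ≠ b i → (∀ j, j ≠ i → b j = a j) →
      b = Function.update a i (1 - a i) := by
    intro a b hab hag'
    funext j
    by_cases hj : j = i
    · subst hj
      rw [Function.update_self]
      exact flip2 _ _ hab
    · rw [Function.update_of_ne hj]
      exact hag' j hj
  rw [Sym2.mem_iff] at hx
  rcases hx with rfl | rfl
  · rw [← flip_eq x v hne fun j hj => (hag j hj).symm]
  · rw [Sym2.eq_swap, ← flip_eq x u (fun hh => hne hh.symm) fun j hj => hag j hj]

lemma mem_epart_of_adj {n : ℕ} {u v : Fin n → Fin 2} {i : Fin n}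
    (hne : u i ≠ v i) (hag : ∀ j, j ≠ i → u j = v j) :
    s(u, v) ∈ Epart n (if (i : ℕ) = n - 1 then 2 * n - 2 else 2 * (i : ℕ) + par i u) := by
  have hp := par_lt_two i u
  by_cases hi : (i : ℕ) = n - 1
  · rw [if_pos hi]
    have hn : 1 ≤ n := i.pos
    exact ⟨u, v, i, rfl, hne, hag, by omega, Or.inl rfl⟩
  · rw [if_neg hi]
    exact ⟨u, v, i, rfl, hne, hag, by omega, Or.inr (by omega)⟩

lemma epart_index_lt {n : ℕ} (i : Fin n) (u : Fin n → Fin 2) :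
    (if (i : ℕ) = n - 1 then 2 * n - 2 else 2 * (i : ℕ) + par i u) < 2 * n - 1 := by
  have hp := par_lt_two i u
  have hi := i.isLt
  have hn : 1 ≤ n := i.pos
  by_cases h : (i : ℕ) = n - 1 <;> simp [h] <;> omega

end PMDAux

open PMDAux in
/-- `pmd(Qₙ) ≤ 2n - 1` for `n ≥ 1`. -/
theorem pmd_hypercube_le (n : ℕ) (hn : 1 ≤ n) : pmd (hypercube n) ≤ 2 * n - 1 := by
  apply Nat.sInf_le
  refine ⟨fun m => Epart n (m : ℕ), ?_, ?_, ?_⟩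
  · -- pairwise disjoint
    intro a b hab
    rw [Set.disjoint_left]
    intro e hea heb
    exact hab (Fin.ext (mem_unique a.isLt b.isLt hea heb))
  · -- union is the edge set
    ext e
    induction e using Sym2.ind with
    | _ u v =>
      simp only [Set.mem_iUnion, SimpleGraph.mem_edgeSet]
      constructor
      · rintro ⟨m, u', v', i, heq, hne, hag, -, -⟩
        rw [← SimpleGraph.mem_edgeSet, heq, SimpleGraph.mem_edgeSet]
        exact hyp_adj.mpr ⟨i, hne, hag⟩
      · intro hadj
        obtain ⟨i, hne, hag⟩ := hyp_adj.mp hadj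
        exact ⟨⟨_, epart_index_lt i u⟩, mem_epart_of_adj hne hag⟩
  · -- each part is a positive matching of the remaining graph
    intro m
    refine ⟨?_, ?_, ?_⟩
    · -- contained in edge set of remaining graph
      intro e he
      rw [SimpleGraph.edgeSet_deleteEdges]
      constructor
      · obtain ⟨u, v, i, rfl, hne, hag, -, -⟩ := he
        exact (SimpleGraph.mem_edgeSet _).mpr (hyp_adj.mpr ⟨i, hne, hag⟩)
      · intro hmem
        simp only [Set.mem_iUnion] at hmem
        obtain ⟨j, hjm, hej⟩ := hmem
        have : (j : ℕ) = (m : ℕ) := mem_unique j.isLt m.isLt hej he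
        omega
    · -- matching
      intro e he f hf hef x hxe hxf
      obtain ⟨i, hi, hei⟩ := edge_through he hxe
      obtain ⟨i', hi', hfi⟩ := edge_through hf hxf
      have hii : i = i' := Fin.ext (hi.trans hi'.symm)
      exact hef (by rw [hei, hfi, hii])
    · -- positive weighting
      by_cases hm : (m : ℕ) = 2 * n - 2
      · refine ⟨fun _ => 1, fun u v hadj => ?_⟩
        rw [SimpleGraph.deleteEdges_adj] at hadj
        obtain ⟨hadj', hnot⟩ := hadj
        obtain ⟨i, hne, hag⟩ := hyp_adj.mp hadj'
        have hmem : s(u, v) ∈ Epart n (m : ℕ) := by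
          by_cases hi : (i : ℕ) = n - 1
          · have := mem_epart_of_adj hne hag
            rw [if_pos hi] at this
            rwa [hm]
          · exfalso
            apply hnot
            simp only [Set.mem_iUnion]
            refine ⟨⟨_, epart_index_lt i u⟩, ?_, ?_⟩
            · have hp := par_lt_two i u
              have hilt := i.isLt
              rw [Fin.lt_def]
              simp only [if_neg hi]
              omega
            · show s(u, v) ∈ Epart n
                (if (i : ℕ) = n - 1 then 2 * n - 2 else 2 * (i : ℕ) + par i u)
              exact mem_epart_of_adj hne hag
        exact iff_of_true (by norm_num) hmem
      · have him : (m : ℕ) / 2 < n := by have := m.isLt; omega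
        refine ⟨fun a => if par ⟨(m : ℕ) / 2, him⟩ a = (m : ℕ) % 2 then 1 else -2,
          fun u v hadj => ?_⟩
        set i : Fin n := ⟨(m : ℕ) / 2, him⟩ with hidef
        rw [SimpleGraph.deleteEdges_adj] at hadj
        obtain ⟨hadj', -⟩ := hadj
        obtain ⟨k, hne, hag⟩ := hyp_adj.mp hadj'
        change 0 < (if par i u = (m : ℕ) % 2 then (1 : ℝ) else -2) +
          (if par i v = (m : ℕ) % 2 then (1 : ℝ) else -2) ↔ s(u, v) ∈ Epart n (m : ℕ)
        by_cases hk : k = i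
        · subst hk
          have hpv : par i u = par i v := par_eq_of_agree i hag
          by_cases hp : par i u = (m : ℕ) % 2
          · have hmem : s(u, v) ∈ Epart n (m : ℕ) :=
              ⟨u, v, i, rfl, hne, hag, by rw [hidef], Or.inr hp⟩
            rw [if_pos hp, if_pos (by rw [← hpv]; exact hp)]
            exact iff_of_true (by norm_num) hmem
          · rw [if_neg hp, if_neg (by rw [← hpv]; exact hp)]
            refine iff_of_false (by norm_num) fun hmem => ?_
            obtain ⟨-, hpar⟩ := mem_spec hmem hne hag
            rcases hpar with hpar | hpar
            · exact hm hpar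
            · exact hp hpar
        · have hflip := par_ne_of_flip i hk hne hag
          have hsum : (if par i u = (m : ℕ) % 2 then (1 : ℝ) else -2) +
              (if par i v = (m : ℕ) % 2 then (1 : ℝ) else -2) < 0 := by
            by_cases hu : par i u = (m : ℕ) % 2
            · rw [if_pos hu, if_neg (by rw [← hu]; exact fun hh => hflip hh.symm)]
              norm_num
            · rw [if_neg hu]
              by_cases hv : par i v = (m : ℕ) % 2
              · rw [if_pos hv]; norm_num
              · rw [if_neg hv]; norm_num
          refine iff_of_false (by linarith) fun hmem => ?_
          have hd := (mem_spec hmem hne hag).1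
          exact hk (Fin.ext hd)
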